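/- Let ℓ ≥ 3, let A_1, …, A_ℓ be pairwise disjoint finite sets with union V, and let ℬ = {B_1, …, B_ℓ} be an ℓ-core with U(ℬ) = B_1 ∪ … ∪ B_ℓ. Define 𝒮(ℬ) := { B_i ∪ {x} : i ∈ {1,…,ℓ}, x ∈ A_i \ U(ℬ) }. Then |S ∩ A_i| = 1 for every S ∈ 𝒮(ℬ) and every i; for any two distinct S, T ∈ 𝒮(ℬ) the number of indices i with S ∩ T ∩ A_i = ∅ is odd; and |𝒮(ℬ)| = |V| − |U(ℬ)|. -/
import Mathlib


/-- Given pairwise disjoint parts `A 0, …, A (ℓ-1)`, an `ℓ`-core is a family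
`B 0, …, B (ℓ-1)` such that each `B i` has `ℓ − 1` elements, `B i ∩ A i = ∅`,
`|B i ∩ A j| = 1` for `j ≠ i`, and `|B i ∩ B j| ≢ ℓ (mod 2)` for all `i, j`. -/
def IsCore {α : Type*} [DecidableEq α] (ℓ : ℕ)
    (A B : Fin ℓ → Finset α) : Prop :=
  (∀ i, (B i).card = ℓ - 1) ∧
  (∀ i, B i ∩ A i = ∅) ∧
  (∀ i j, i ≠ j → (B i ∩ A j).card = 1) ∧
  (∀ i j, ¬ ((B i ∩ B j).card ≡ ℓ [MOD 2]))

/-- The family `𝒮(ℬ) = { B i ∪ {x} : x ∈ A i \ U(ℬ) }` generated by an `ℓ`-core is an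
`ℓ`-semi-intersecting family with `k = 1` of size `|V| − |U(ℬ)|`. -/
theorem stmt_10 {α : Type*} [DecidableEq α] (ℓ : ℕ) (hℓ : 3 ≤ ℓ)
    (A B : Fin ℓ → Finset α)
    (hdisj : ∀ i j, i ≠ j → Disjoint (A i) (A j))
    (hcore : IsCore ℓ A B)
    (U : Finset α) (hU : U = Finset.univ.biUnion B)
    (𝒮 : Finset (Finset α))
    (h𝒮 : 𝒮 = Finset.univ.biUnion (fun i => (A i \ U).image (fun x => insert x (B i)))) :
    (∀ S ∈ 𝒮, ∀ i, (S ∩ A i).card = 1) ∧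
    (∀ S ∈ 𝒮, ∀ T ∈ 𝒮, S ≠ T →
      Odd ((Finset.univ.filter (fun i => S ∩ T ∩ A i = ∅)).card)) ∧
    𝒮.card = (Finset.univ.biUnion A).card - U.card := by
  obtain ⟨h1, h2, h3, h4⟩ := hcore
  have hBU : ∀ i, B i ⊆ U := by
    intro i
    rw [hU]
    intro b hb
    exact Finset.mem_biUnion.2 ⟨i, Finset.mem_univ i, hb⟩
  -- every element of B i lies in some A j with j ≠ i
  have hkey : ∀ i, B i = (Finset.univ.erase i).biUnion (fun j => B i ∩ A j) := by
    intro i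
    have hsub : (Finset.univ.erase i).biUnion (fun j => B i ∩ A j) ⊆ B i := by
      intro b hb
      obtain ⟨j, _, hbj⟩ := Finset.mem_biUnion.1 hb
      exact (Finset.mem_inter.1 hbj).1
    have hcard : ((Finset.univ.erase i).biUnion (fun j => B i ∩ A j)).card = ℓ - 1 := by
      rw [Finset.card_biUnion]
      · rw [Finset.sum_congr rfl
          (fun j hj => h3 i j (Ne.symm (Finset.ne_of_mem_erase hj)))]
        simp [Finset.card_erase_of_mem]
      · intro j hj k hk hjk
        refine Finset.disjoint_left.2 fun b hbj hbk => ?_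
        exact Finset.disjoint_left.1 (hdisj j k hjk) (Finset.mem_inter.1 hbj).2
          (Finset.mem_inter.1 hbk).2
    exact (Finset.eq_of_subset_of_card_le hsub (by rw [hcard, h1 i])).symm
  have hmemA : ∀ i, ∀ b ∈ B i, ∃ j, j ≠ i ∧ b ∈ A j := by
    intro i b hb
    rw [hkey i] at hb
    obtain ⟨j, hj, hbj⟩ := Finset.mem_biUnion.1 hb
    exact ⟨j, Finset.ne_of_mem_erase hj, (Finset.mem_inter.1 hbj).2⟩
  have hmemS : ∀ S ∈ 𝒮, ∃ i x, x ∈ A i ∧ x ∉ U ∧ S = insert x (B i) := by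
    intro S hS
    rw [h𝒮] at hS
    obtain ⟨i, _, hi⟩ := Finset.mem_biUnion.1 hS
    obtain ⟨x, hx, hxS⟩ := Finset.mem_image.1 hi
    obtain ⟨hx1, hx2⟩ := Finset.mem_sdiff.1 hx
    exact ⟨i, x, hx1, hx2, hxS.symm⟩
  -- part 1
  have part1 : ∀ S ∈ 𝒮, ∀ i, (S ∩ A i).card = 1 := by
    intro S hS i
    obtain ⟨j, x, hxA, hxU, rfl⟩ := hmemS S hS
    rcases eq_or_ne i j with rfl | hij
    · rw [Finset.insert_inter_of_mem hxA, h2 i]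
      simp
    · have hxAi : x ∉ A i := fun hxi =>
        Finset.disjoint_left.1 (hdisj i j hij) hxi hxA
      rw [Finset.insert_inter_of_notMem hxAi]
      exact h3 j i (fun h => hij h.symm)
  refine ⟨part1, ?_, ?_⟩
  · -- part 2
    intro S hS T hT hST
    obtain ⟨i, x, hxA, hxU, rfl⟩ := hmemS S hS
    obtain ⟨j, y, hyA, hyU, rfl⟩ := hmemS T hT
    rcases eq_or_ne i j with rfl | hij
    · -- same index : intersection is B i
      have hxy : x ≠ y := fun h => hST (by rw [h])
      have hint : insert x (B i) ∩ insert y (B i) = B i := by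
        ext z
        simp only [Finset.mem_inter, Finset.mem_insert]
        constructor
        · rintro ⟨hz1 | hz1, hz2 | hz2⟩
          · exact absurd (hz1.symm.trans hz2) hxy
          · exact hz2
          · exact hz1
          · exact hz1
        · exact fun hz => ⟨Or.inr hz, Or.inr hz⟩
      rw [hint]
      have hfilt : Finset.univ.filter (fun k => B i ∩ A k = ∅) = {i} := by
        ext k
        simp only [Finset.mem_filter, Finset.mem_univ, true_and, Finset.mem_singleton]
        constructor
        · intro hk
          by_contra hki
          have := h3 i k (fun h => hki h.symm)
          rw [hk] at this
          simp at this
        · intro hk; rw [hk]; exact h2 i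
      rw [hfilt]
      simp
    · -- distinct indices : intersection is B i ∩ B j
      have hxy : x ≠ y := fun h =>
        Finset.disjoint_left.1 (hdisj i j hij) hxA (h ▸ hyA)
      have hxBj : x ∉ B j := fun h => hxU (hBU j h)
      have hyBi : y ∉ B i := fun h => hyU (hBU i h)
      have hint : insert x (B i) ∩ insert y (B j) = B i ∩ B j := by
        ext z
        simp only [Finset.mem_inter, Finset.mem_insert]
        constructor
        · rintro ⟨hz1 | hz1, hz2 | hz2⟩
          · exact absurd (hz1.symm.trans hz2) hxy
          · exact absurd (hz1 ▸ hz2) hxBj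
          · exact absurd (hz2 ▸ hz1) hyBi
          · exact ⟨hz1, hz2⟩
        · exact fun hz => ⟨Or.inr hz.1, Or.inr hz.2⟩
      rw [hint]
      set D := B i ∩ B j with hD
      have hDsub : D ⊆ B i := Finset.inter_subset_left
      clear_value D
      have hone : ∀ k, D ∩ A k ≠ ∅ → (D ∩ A k).card = 1 := by
        intro k hk
        rcases eq_or_ne k i with rfl | hki
        · exfalso
          apply hk
          have : D ∩ A k ⊆ B k ∩ A k :=
            Finset.inter_subset_inter hDsub (le_refl _)
          rw [h2 k] at this
          exact Finset.subset_empty.1 this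
        · have hle : (D ∩ A k).card ≤ 1 := by
            have : D ∩ A k ⊆ B i ∩ A k :=
              Finset.inter_subset_inter hDsub (le_refl _)
            calc (D ∩ A k).card ≤ (B i ∩ A k).card := Finset.card_le_card this
              _ = 1 := h3 i k (fun h => hki (h.symm))
          have hpos : 0 < (D ∩ A k).card :=
            Finset.card_pos.2 (Finset.nonempty_of_ne_empty hk)
          omega
      have hsum1 : ∑ k, (D ∩ A k).card
          = (Finset.univ.filter (fun k => ¬ (D ∩ A k = ∅))).card := by
        rw [Finset.card_filter]
        refine Finset.sum_congr rfl fun k _ => ?_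
        by_cases h : D ∩ A k = ∅
        · simp [h]
        · simp [h, hone k h]
      have hsum2 : ∑ k, (D ∩ A k).card = D.card := by
        have hDun : D = Finset.univ.biUnion (fun k => D ∩ A k) := by
          apply Finset.Subset.antisymm
          · intro d hd
            obtain ⟨k, _, hdk⟩ := hmemA i d (hDsub hd)
            exact Finset.mem_biUnion.2 ⟨k, Finset.mem_univ k, Finset.mem_inter.2 ⟨hd, hdk⟩⟩
          · intro d hd
            obtain ⟨k, _, hdk⟩ := Finset.mem_biUnion.1 hd
            exact (Finset.mem_inter.1 hdk).1
        conv_rhs => rw [hDun]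
        rw [Finset.card_biUnion]
        intro k _ m _ hkm
        refine Finset.disjoint_left.2 fun b hbk hbm => ?_
        exact Finset.disjoint_left.1 (hdisj k m hkm) (Finset.mem_inter.1 hbk).2
          (Finset.mem_inter.1 hbm).2
      have hcompl := Finset.card_filter_add_card_filter_not
        (s := (Finset.univ : Finset (Fin ℓ))) (p := fun k => D ∩ A k = ∅)
      have huniv : (Finset.univ : Finset (Fin ℓ)).card = ℓ := by simp
      have hDle : D.card ≤ ℓ := by
        calc D.card ≤ (B i).card := Finset.card_le_card hDsub
          _ = ℓ - 1 := h1 i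
          _ ≤ ℓ := Nat.sub_le _ _
      have hfin : (Finset.univ.filter (fun k => D ∩ A k = ∅)).card + D.card = ℓ := by
        rw [← hsum2, hsum1, hcompl, huniv]
      have hmod := h4 i j
      rw [Nat.ModEq, ← hD] at hmod
      rw [Nat.odd_iff]
      omega
  · -- part 3
    rw [h𝒮]
    have himg : ∀ i, ((A i \ U).image (fun x => insert x (B i))).card = (A i \ U).card := by
      intro i
      apply Finset.card_image_of_injOn
      intro x hx y hy hxy
      have hxU : x ∉ U := (Finset.mem_sdiff.1 hx).2
      have hxy' : insert x (B i) = insert y (B i) := hxy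
      have : x ∈ insert y (B i) := by
        rw [← hxy']; exact Finset.mem_insert_self x (B i)
      rcases Finset.mem_insert.1 this with h | h
      · exact h
      · exact absurd (hBU i h) hxU
    rw [Finset.card_biUnion]
    · rw [Finset.sum_congr rfl fun i _ => himg i]
      have hUV : U ⊆ Finset.univ.biUnion A := by
        intro u hu
        rw [hU] at hu
        obtain ⟨i, _, hui⟩ := Finset.mem_biUnion.1 hu
        obtain ⟨k, _, huk⟩ := hmemA i u hui
        exact Finset.mem_biUnion.2 ⟨k, Finset.mem_univ k, huk⟩
      have hsd : Finset.univ.biUnion (fun i => A i \ U) = Finset.univ.biUnion A \ U := by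
        ext z
        simp only [Finset.mem_biUnion, Finset.mem_sdiff, Finset.mem_univ, true_and]
        tauto
      have : ∑ i, (A i \ U).card = (Finset.univ.biUnion (fun i => A i \ U)).card := by
        rw [Finset.card_biUnion]
        intro k _ m _ hkm
        refine Finset.disjoint_left.2 fun b hbk hbm => ?_
        exact Finset.disjoint_left.1 (hdisj k m hkm) (Finset.mem_sdiff.1 hbk).1
          (Finset.mem_sdiff.1 hbm).1
      rw [this, hsd, Finset.card_sdiff_of_subset hUV]
    · intro i _ j _ hij
      refine Finset.disjoint_left.2 fun S hSi hSj => ?_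
      obtain ⟨x, hx, rfl⟩ := Finset.mem_image.1 hSi
      obtain ⟨y, hy, hxy⟩ := Finset.mem_image.1 hSj
      have hxA := (Finset.mem_sdiff.1 hx).1
      have hxU := (Finset.mem_sdiff.1 hx).2
      have hyA := (Finset.mem_sdiff.1 hy).1
      have hxy' : insert y (B j) = insert x (B i) := hxy
      have : x ∈ insert y (B j) := by
        rw [hxy']; exact Finset.mem_insert_self x (B i)
      rcases Finset.mem_insert.1 this with h | h
      · exact Finset.disjoint_left.1 (hdisj i j hij) hxA (h ▸ hyA)
      · exact hxU (hBU j h)
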